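/- Let R be a finite commutative chain ring with maximal ideal m = (π) of nilpotency index ν, and S a Galois extension of R of degree m with maximal ideal mS and residue field F_{q^m} = S/mS. The map φ : π^(ν−1) S → S/mS given by φ(π^(ν−1) u) = u + mS is a well-defined isomorphism of R/m-vector spaces, and its coefficient-by-coefficient extension from π^(ν−1) S^n to F_{q^m}^n is an isometry between the normed spaces (π^(ν−1) S^n, rk_R) and (F_{q^m}^n, rk_{F_q}), i.e., rk_R(x) = rk_{F_q}(φ(x)) for all x ∈ π^(ν−1) S^n. -/

import Mathlib

open IsLocalRing

/-- The rank of a submodule `N`: the smallest number of elements generating `N`. -/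
noncomputable def subrank {R M : Type*} [Semiring R] [AddCommMonoid M] [Module R M]
    (N : Submodule R M) : ℕ :=
  sInf {k | ∃ f : Fin k → M, Submodule.span R (Set.range f) = N}

/-- The rank of a vector `u ∈ S^n` over `R`: the smallest number of generators of the
`R`-submodule of `S` generated by the coordinates of `u` (i.e. of the support of `u`). -/
noncomputable def vecrank (R : Type*) {S : Type*} {n : ℕ} [Semiring R] [AddCommMonoid S]
    [Module R S] (u : Fin n → S) : ℕ :=
  subrank (Submodule.span R (Set.range u))

/-- The minimum rank distance of a linear code `C ⊆ S^n`, ranks being taken over `K`. -/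
noncomputable def minrkdist (K : Type*) {S : Type*} {n : ℕ} [Semiring K] [Ring S]
    [Module K S] (C : Submodule S (Fin n → S)) : ℕ :=
  sInf {d | ∃ u ∈ C, ∃ v ∈ C, u ≠ v ∧ vecrank K (u - v) = d}

/-- The residue field of `S` as an algebra over the residue field of `R`, via the map
induced by `algebraMap R S`. -/
noncomputable instance residueFieldAlgebra {R S : Type*} [CommRing R] [IsLocalRing R]
    [CommRing S] [IsLocalRing S] [Algebra R S] [IsLocalHom (algebraMap R S)] :
    Algebra (ResidueField R) (ResidueField S) :=
  (ResidueField.map (algebraMap R S)).toAlgebra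

open Pointwise in
private lemma mem_socle_iff {R S : Type*} [CommRing R] [CommRing S] [Algebra R S]
    (c : R) (x : S) :
    x ∈ Ideal.span {c} • (⊤ : Submodule R S) ↔ ∃ u : S, c • u = x := by
  rw [Submodule.ideal_span_singleton_smul]
  constructor
  · intro hx
    obtain ⟨u, -, hu⟩ := Set.mem_smul_set.mp hx
    exact ⟨u, hu⟩
  · rintro ⟨u, rfl⟩
    exact Submodule.smul_mem_pointwise_smul u c ⊤ trivial

private lemma subrank_map_eq {R M M₂ : Type*} [Semiring R] [AddCommMonoid M] [Module R M]
    [AddCommMonoid M₂] [Module R M₂] (f : M →ₗ[R] M₂) (hf : Function.Injective f)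
    (P : Submodule R M) : subrank (P.map f) = subrank P := by
  unfold subrank
  congr 1
  ext k
  constructor
  · rintro ⟨g, hg⟩
    have hexists : ∀ i : Fin k, ∃ p : M, p ∈ P ∧ f p = g i := by
      intro i
      have : g i ∈ P.map f := hg ▸ Submodule.subset_span (Set.mem_range_self i)
      obtain ⟨p, hp, hfp⟩ := Submodule.mem_map.mp this
      exact ⟨p, hp, hfp⟩
    choose p hp hfp using hexists
    refine ⟨p, Submodule.map_injective_of_injective hf ?_⟩
    rw [Submodule.map_span, ← Set.range_comp]
    have hcomp : f ∘ p = g := funext hfp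
    rw [hcomp, hg]
  · rintro ⟨g, hg⟩
    exact ⟨f ∘ g, by rw [Set.range_comp, ← Submodule.map_span, hg]⟩

private lemma span_coe_eq_of_surj {R K V : Type*} [Semiring R] [Semiring K]
    [AddCommMonoid V] [Module R V] [Module K V]
    (h1 : ∀ k : K, ∃ r : R, ∀ v : V, k • v = r • v)
    (h2 : ∀ r : R, ∃ k : K, ∀ v : V, r • v = k • v) (s : Set V) :
    (Submodule.span R s : Set V) = (Submodule.span K s : Set V) := by
  apply Set.Subset.antisymm
  · intro x hx
    refine Submodule.span_induction (fun y hy => Submodule.subset_span hy)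
      (Submodule.zero_mem _) (fun a b _ _ ha hb => Submodule.add_mem _ ha hb) ?_ hx
    intro r v _ hv
    obtain ⟨k, hk⟩ := h2 r
    rw [hk v]
    exact Submodule.smul_mem _ k hv
  · intro x hx
    refine Submodule.span_induction (fun y hy => Submodule.subset_span hy)
      (Submodule.zero_mem _) (fun a b _ _ ha hb => Submodule.add_mem _ ha hb) ?_ hx
    intro k v _ hv
    obtain ⟨r, hr⟩ := h1 k
    rw [hr v]
    exact Submodule.smul_mem _ r hv

private lemma subrank_span_eq {R K V : Type*} [Semiring R] [Semiring K]
    [AddCommMonoid V] [Module R V] [Module K V]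
    (h1 : ∀ k : K, ∃ r : R, ∀ v : V, k • v = r • v)
    (h2 : ∀ r : R, ∃ k : K, ∀ v : V, r • v = k • v) (s : Set V) :
    subrank (Submodule.span R s) = subrank (Submodule.span K s) := by
  unfold subrank
  congr 1
  ext k
  constructor
  · rintro ⟨g, hg⟩
    refine ⟨g, SetLike.coe_injective ?_⟩
    rw [← span_coe_eq_of_surj h1 h2, hg, span_coe_eq_of_surj h1 h2]
  · rintro ⟨g, hg⟩
    refine ⟨g, SetLike.coe_injective ?_⟩
    rw [span_coe_eq_of_surj h1 h2, hg, ← span_coe_eq_of_surj h1 h2]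

theorem socle_residue_isometry
    (R S : Type*) [CommRing R] [Finite R] [IsLocalRing R] [IsPrincipalIdealRing R]
    [CommRing S] [Finite S] [IsLocalRing S] [IsPrincipalIdealRing S]
    [Algebra R S] [IsLocalHom (algebraMap R S)] [Module.Free R S]
    (π : R) (hπ : Ideal.span {π} = maximalIdeal R)
    (ν : ℕ) (hν : 0 < ν) (hνnil : π ^ ν = 0) (hνmin : π ^ (ν - 1) ≠ 0)
    (m : ℕ) (hm : Module.finrank R S = m)
    (hGal : maximalIdeal S = Ideal.map (algebraMap R S) (maximalIdeal R)) :
    ∃ φ : ↥(Ideal.span {π ^ (ν - 1)} • (⊤ : Submodule R S)) ≃+ ResidueField S,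
      (∀ (x : ↥(Ideal.span {π ^ (ν - 1)} • (⊤ : Submodule R S))) (u : S),
        (x : S) = π ^ (ν - 1) • u → φ x = residue S u) ∧
      (∀ (r : R) (x : ↥(Ideal.span {π ^ (ν - 1)} • (⊤ : Submodule R S))),
        φ (r • x) = residue R r • φ x) ∧
      (∀ (n : ℕ) (y : Fin n → S),
        vecrank R (π ^ (ν - 1) • y) =
          vecrank (ResidueField R) (fun i => residue S (y i))) := by
  classical
  set c : R := π ^ (ν - 1) with hc
  set cs : S := algebraMap R S c with hcs
  -- `cs ≠ 0` since `S` is free over `R`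
  have hcs0 : cs ≠ 0 := by
    intro h
    have b := Module.Free.chooseBasis R S
    obtain ⟨i⟩ := b.index_nonempty
    apply hνmin
    have h1 : c • (b i) = 0 := by rw [Algebra.smul_def, ← hcs, h, zero_mul]
    have h2 := congrArg (fun z => b.repr z i) h1
    simpa using h2
  -- kernel of multiplication by `cs` is the maximal ideal
  have hπc : algebraMap R S π * cs = 0 := by
    rw [hcs, ← map_mul]
    have hν1 : ν - 1 + 1 = ν := Nat.succ_pred_eq_of_pos hν
    have : π * c = π ^ ν := by rw [hc, ← pow_succ', hν1]
    rw [this, hνnil, map_zero]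
  have hker : ∀ u : S, u * cs = 0 ↔ u ∈ maximalIdeal S := by
    intro u
    constructor
    · intro h
      by_contra hu
      rw [mem_maximalIdeal, mem_nonunits_iff, not_not] at hu
      exact hcs0 ((hu.mul_right_eq_zero).mp h)
    · intro h
      have hmax : maximalIdeal S = Ideal.span {algebraMap R S π} := by
        rw [hGal, ← hπ, Ideal.map_span, Set.image_singleton]
      rw [hmax, Ideal.mem_span_singleton] at h
      obtain ⟨v, rfl⟩ := h
      rw [mul_right_comm, hπc, zero_mul]
  -- the `S`-linear map `u ↦ u * cs` and its factorization through the residue field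
  set LS : S →ₗ[S] S := LinearMap.toSpanSingleton S S cs with hLS
  have hLSapp : ∀ u : S, LS u = c • u := by
    intro u
    show u • cs = c • u
    rw [smul_eq_mul, Algebra.smul_def, ← hcs, mul_comm]
  have hkerLS : LinearMap.ker LS = (maximalIdeal S : Ideal S) := by
    ext u
    rw [LinearMap.mem_ker]
    show u • cs = 0 ↔ _
    rw [smul_eq_mul]
    exact hker u
  set j' : ResidueField S →ₗ[S] S :=
    Submodule.liftQ (maximalIdeal S) LS (le_of_eq hkerLS.symm) with hj'
  have hj'mk : ∀ u : S, j' (residue S u) = c • u := by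
    intro u
    exact hLSapp u
  have hj'inj : Function.Injective j' := by
    rw [← LinearMap.ker_eq_bot]
    exact Submodule.ker_liftQ_eq_bot _ _ _ (le_of_eq hkerLS)
  haveI hST : IsScalarTower R S (ResidueField S) := by
    refine ⟨fun r s v => ?_⟩
    rw [Algebra.smul_def r s, Algebra.smul_def, Algebra.smul_def s v, Algebra.smul_def r,
      map_mul, mul_assoc]
    rfl
  set j : ResidueField S →ₗ[R] S :=
    { toFun := j'
      map_add' := fun a b => map_add j' a b
      map_smul' := fun r v => by
        show j' (r • v) = r • j' v
        rw [← algebraMap_smul S r v, map_smul, algebraMap_smul] } with hjdef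
  have hjmk : ∀ u : S, j (residue S u) = c • u := hj'mk
  have hjinj : Function.Injective j := fun a b h => hj'inj h
  -- the socle
  set soc : Submodule R S := Ideal.span {c} • (⊤ : Submodule R S) with hsoc
  have hsocmem : ∀ u : S, c • u ∈ soc := fun u => (mem_socle_iff c _).mpr ⟨u, rfl⟩
  have hjmem : ∀ w : ResidueField S, j w ∈ soc := by
    intro w
    obtain ⟨u, rfl⟩ := Submodule.Quotient.mk_surjective _ w
    rw [show (Submodule.Quotient.mk u : ResidueField S) = residue S u from rfl, hjmk u]
    exact hsocmem u
  set jc : ResidueField S →ₗ[R] ↥soc := j.codRestrict soc hjmem with hjc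
  have hjcbij : Function.Bijective jc := by
    constructor
    · intro w w' hww
      exact hjinj (congrArg Subtype.val hww)
    · intro x
      obtain ⟨u, hu⟩ := (mem_socle_iff c (x : S)).mp x.2
      refine ⟨residue S u, Subtype.ext ?_⟩
      show j (residue S u) = (x : S)
      rw [hjmk u, hu]
  set e : ResidueField S ≃ₗ[R] ↥soc := LinearEquiv.ofBijective jc hjcbij with he
  have heapp : ∀ u : S, ((e (residue S u) : ↥soc) : S) = c • u := by
    intro u
    show j (residue S u) = c • u
    exact hjmk u
  set φ : ↥soc ≃+ ResidueField S := e.symm.toAddEquiv with hφ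
  have hφspec : ∀ (x : ↥soc) (u : S), (x : S) = c • u → φ x = residue S u := by
    intro x u hxu
    have hx : e (residue S u) = x := Subtype.ext (by rw [heapp u, hxu])
    show e.symm x = residue S u
    rw [← hx, LinearEquiv.symm_apply_apply]
  have hsmul : ∀ (r : R) (v : ResidueField S), residue R r • v = r • v := by
    intro r v
    show ResidueField.map (algebraMap R S) (residue R r) * v = r • v
    rw [ResidueField.map_residue, Algebra.smul_def]
    rfl
  refine ⟨φ, hφspec, ?_, ?_⟩
  · -- semilinearity
    intro r x
    obtain ⟨u, hu⟩ := (mem_socle_iff c (x : S)).mp x.2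
    have hxu : (x : S) = c • u := hu.symm
    have hcomp : ((r • x : ↥soc) : S) = c • (algebraMap R S r * u) := by
      show r • (x : S) = c • (algebraMap R S r * u)
      rw [hxu, Algebra.smul_def r, Algebra.smul_def c, Algebra.smul_def c]
      ring
    rw [hφspec (r • x) _ hcomp, hφspec x u hxu]
    show _ = ResidueField.map (algebraMap R S) (residue R r) * residue S u
    rw [ResidueField.map_residue, ← map_mul]
  · -- the isometry
    intro n y
    have h1 : ∀ k : ResidueField R, ∃ r : R, ∀ v : ResidueField S, k • v = r • v := by
      intro k
      obtain ⟨r, rfl⟩ := Ideal.Quotient.mk_surjective k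
      exact ⟨r, fun v => hsmul r v⟩
    have h2 : ∀ r : R, ∃ k : ResidueField R, ∀ v : ResidueField S, r • v = k • v :=
      fun r => ⟨residue R r, fun v => (hsmul r v).symm⟩
    have hrange : Submodule.span R (Set.range (c • y)) =
        Submodule.map j (Submodule.span R (Set.range fun i => residue S (y i))) := by
      rw [Submodule.map_span, ← Set.range_comp]
      congr 1
      have hfun : (j ∘ fun i => residue S (y i)) = c • y := by
        funext i
        show j (residue S (y i)) = (c • y) i
        rw [hjmk, Pi.smul_apply]
      rw [hfun]
    show subrank (Submodule.span R (Set.range (c • y))) = _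
    rw [hrange, subrank_map_eq j hjinj]
    refine subrank_span_eq (fun k => ?_) (fun r => ⟨residue R r, fun v => ?_⟩) _
    · obtain ⟨r, rfl⟩ := residue_surjective k
      refine ⟨r, fun v => ?_⟩
      obtain ⟨s, rfl⟩ := residue_surjective v
      rfl
    · obtain ⟨s, rfl⟩ := residue_surjective v
      rfl
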